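/- arXiv:2603.01435 — 3 statements merged into one kernel-verified Lean document; each statement's English description precedes it below -/
import Mathlib

section
/- Local quadratic expansion of Kullback–Leibler divergence: let p = (p_i) and q = (q_i) be probability distributions on [n] with q_min := min_i q_i > 0 and max_i |p_i - q_i| ≤ q_min/2. Then |D(p‖q) - (1/2) Σ_i (p_i - q_i)²/q_i| ≤ 5 q_min^{-2} Σ_i |p_i - q_i|³, where D(p‖q) = Σ_i p_i log(p_i/q_i). -/
lemma auxA (x : ℝ) (hx : |x| ≤ 1/2) :
    |(1+x) * Real.log (1+x) - x - x^2/2| ≤ 7/2 * |x|^3 := by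
  have hx1 : |x| < 1 := lt_of_le_of_lt hx (by norm_num)
  have h := Real.abs_log_sub_add_sum_range_le (x := -x) (by rwa [abs_neg]) 2
  rw [Finset.sum_range_succ, Finset.sum_range_one] at h
  have e2 : (-x) ^ (0+1) / ((0:ℕ) + 1 : ℝ) + (-x) ^ (1+1) / ((1:ℕ) + 1 : ℝ)
      + Real.log (1 - -x) = Real.log (1 + x) - x + x^2/2 := by push_cast; ring_nf
  rw [e2, abs_neg] at h
  have hg : |Real.log (1+x) - x + x^2/2| ≤ 2 * |x|^3 := by
    refine h.trans ?_
    have h1 : (1:ℝ)/2 ≤ 1 - |x| := by linarith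
    calc |x| ^ (2+1) / (1 - |x|) ≤ |x|^3 / (1/2) :=
          div_le_div_of_nonneg_left (by positivity) (by norm_num) h1
      _ = 2 * |x|^3 := by ring
  have key : (1+x) * Real.log (1+x) - x - x^2/2
      = (1+x) * (Real.log (1+x) - x + x^2/2) - x^3/2 := by ring
  rw [key]
  have h1x : |1+x| ≤ 3/2 := by
    have := abs_le.mp hx; rw [abs_le]; constructor <;> linarith [this.1, this.2]
  calc |(1+x) * (Real.log (1+x) - x + x^2/2) - x^3/2|
      ≤ |(1+x) * (Real.log (1+x) - x + x^2/2)| + |x^3/2| := abs_sub _ _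
    _ = |1+x| * |Real.log (1+x) - x + x^2/2| + |x|^3/2 := by
        rw [abs_mul, abs_div, abs_pow]; norm_num
    _ ≤ (3/2) * (2 * |x|^3) + |x|^3/2 := by
        have := abs_nonneg (Real.log (1+x) - x + x^2/2)
        gcongr
    _ = 7/2 * |x|^3 := by ring

lemma auxB (p q : ℝ) (hq : 0 < q) (hc : |p - q| ≤ q/2) :
    |p * Real.log (p/q) - (p - q) - (p-q)^2/(2*q)| ≤ 7/2 * |p-q|^3 / q^2 := by
  have hq' : q ≠ 0 := hq.ne'
  have hx : |(p-q)/q| ≤ 1/2 := by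
    rw [abs_div, abs_of_pos hq, div_le_iff₀ hq]; linarith
  have harg : (1:ℝ) + (p-q)/q = p/q := by field_simp; ring
  have key : p * Real.log (p/q) - (p - q) - (p-q)^2/(2*q)
      = q * ((1 + (p-q)/q) * Real.log (1 + (p-q)/q) - (p-q)/q - ((p-q)/q)^2/2) := by
    rw [harg]; field_simp
  rw [key, abs_mul, abs_of_pos hq]
  have hA := auxA ((p-q)/q) hx
  calc q * |(1 + (p-q)/q) * Real.log (1 + (p-q)/q) - (p-q)/q - ((p-q)/q)^2/2|
      ≤ q * (7/2 * |(p-q)/q|^3) := by gcongr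
    _ = 7/2 * |p-q|^3 / q^2 := by
        rw [abs_div, abs_of_pos hq, div_pow]
        field_simp

/-- Local quadratic expansion of the Kullback–Leibler divergence. -/
theorem stmt_6 (n : ℕ) (p q : Fin (n + 1) → ℝ)
    (hp0 : ∀ i, 0 ≤ p i) (hp1 : ∑ i, p i = 1)
    (hq0 : ∀ i, 0 ≤ q i) (hq1 : ∑ i, q i = 1)
    (qmin : ℝ) (hqmin : qmin = Finset.univ.inf' Finset.univ_nonempty q)
    (hpos : 0 < qmin)
    (hclose : ∀ i, |p i - q i| ≤ qmin / 2) :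
    |(∑ i, p i * Real.log (p i / q i)) - (1 / 2) * ∑ i, (p i - q i) ^ 2 / q i|
      ≤ 5 * (qmin ^ 2)⁻¹ * ∑ i, |p i - q i| ^ 3 := by
  have hqi : ∀ i, qmin ≤ q i := fun i => by
    rw [hqmin]; exact Finset.inf'_le _ (Finset.mem_univ i)
  have hqpos : ∀ i, 0 < q i := fun i => lt_of_lt_of_le hpos (hqi i)
  have hsum0 : ∑ i, (p i - q i) = 0 := by
    rw [Finset.sum_sub_distrib, hp1, hq1]; ring
  have key : (∑ i, p i * Real.log (p i / q i)) - (1/2) * ∑ i, (p i - q i)^2 / q i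
      = ∑ i, (p i * Real.log (p i / q i) - (p i - q i) - (p i - q i)^2/(2 * q i)) := by
    rw [Finset.sum_sub_distrib, Finset.sum_sub_distrib, hsum0, Finset.mul_sum]
    congr 1
    · ring
    · exact Finset.sum_congr rfl fun i _ => by rw [div_mul_eq_div_div]; ring
  rw [key]
  calc |∑ i, (p i * Real.log (p i / q i) - (p i - q i) - (p i - q i)^2/(2 * q i))|
      ≤ ∑ i, |p i * Real.log (p i / q i) - (p i - q i) - (p i - q i)^2/(2 * q i)| :=
        Finset.abs_sum_le_sum_abs _ _
    _ ≤ ∑ i, 5 * (qmin^2)⁻¹ * |p i - q i|^3 := by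
        refine Finset.sum_le_sum fun i _ => ?_
        have hci : |p i - q i| ≤ q i / 2 := (hclose i).trans (by linarith [hqi i])
        refine (auxB (p i) (q i) (hqpos i) hci).trans ?_
        have h2 : ((q i)^2)⁻¹ ≤ (qmin^2)⁻¹ :=
          inv_anti₀ (by positivity) (by nlinarith [hqi i, hpos.le])
        calc 7/2 * |p i - q i|^3 / (q i)^2
            = 7/2 * (((q i)^2)⁻¹ * |p i - q i|^3) := by ring
          _ ≤ 7/2 * ((qmin^2)⁻¹ * |p i - q i|^3) := by gcongr
          _ ≤ 5 * ((qmin^2)⁻¹ * |p i - q i|^3) := by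
              have : (0:ℝ) ≤ (qmin^2)⁻¹ * |p i - q i|^3 := by positivity
              nlinarith
          _ = 5 * (qmin^2)⁻¹ * |p i - q i|^3 := by ring
    _ = 5 * (qmin^2)⁻¹ * ∑ i, |p i - q i|^3 := by rw [Finset.mul_sum]
end

section
/- Counting sequences with all-even multiplicities: the number of sequences (i_1, …, i_m) ∈ [N]^m (m even) such that each value of [N] appears an even number of times is at most (m! / (m/2)!) · N^{m/2}. -/
lemma exists_pairing {α β : Type*} [DecidableEq α] [DecidableEq β] (s : Finset α) (f : α → β)
    (h : ∀ b, Even ((s.filter (fun x => f x = b)).card)) :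
    ∃ g : α → α, (∀ x ∈ s, g x ∈ s) ∧ (∀ x ∈ s, g (g x) = x) ∧ (∀ x ∈ s, g x ≠ x) ∧
      (∀ x ∈ s, f (g x) = f x) := by
  classical
  induction s using Finset.strongInductionOn with
  | _ s ih =>
    rcases s.eq_empty_or_nonempty with rfl | ⟨x, hx⟩
    · exact ⟨id, by simp, by simp, by simp, by simp⟩
    · have hxt : x ∈ s.filter (fun z => f z = f x) := by simp [hx]
      have h2 : 2 ≤ (s.filter (fun z => f z = f x)).card := by
        obtain ⟨c, hc⟩ := h (f x)
        have hpos : 0 < (s.filter (fun z => f z = f x)).card := Finset.card_pos.2 ⟨x, hxt⟩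
        omega
      obtain ⟨y, hy, hyx⟩ := Finset.exists_mem_ne h2 x
      have hys : y ∈ s := (Finset.mem_filter.1 hy).1
      have hfy : f y = f x := (Finset.mem_filter.1 hy).2
      set s' : Finset α := (s.erase x).erase y with hs'
      have hxs' : x ∉ s' := by simp [hs']
      have hys' : y ∉ s' := by simp [hs']
      have hsub : s' ⊆ s := (Finset.erase_subset _ _).trans (Finset.erase_subset _ _)
      have hss : s' ⊂ s :=
        Finset.ssubset_of_subset_of_ssubset (Finset.erase_subset _ _) (Finset.erase_ssubset hx)
      have hmem' : ∀ z, z ∈ s' ↔ (z ∈ s ∧ z ≠ x ∧ z ≠ y) := by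
        intro z; simp [hs', Finset.mem_erase]; tauto
      have hfib : ∀ b, Even ((s'.filter (fun z => f z = b)).card) := by
        intro b
        have hE : s'.filter (fun z => f z = b)
            = ((s.filter (fun z => f z = b)).erase x).erase y := by
          rw [hs', Finset.filter_erase, Finset.filter_erase]
        by_cases hb : b = f x
        · subst hb
          have hyx' : y ∈ (s.filter (fun z => f z = f x)).erase x :=
            Finset.mem_erase.2 ⟨hyx, hy⟩
          rw [hE, Finset.card_erase_of_mem hyx', Finset.card_erase_of_mem hxt]
          obtain ⟨c, hc⟩ := h (f x)
          exact ⟨c - 1, by omega⟩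
        · have hx' : x ∉ s.filter (fun z => f z = b) := by
            simp only [Finset.mem_filter]; tauto
          have hy' : y ∉ s.filter (fun z => f z = b) := by
            simp only [Finset.mem_filter]
            intro hc
            exact hb (hfy ▸ hc.2.symm) 
          rw [hE, Finset.erase_eq_of_notMem hx', Finset.erase_eq_of_notMem hy']
          exact h b
      obtain ⟨g', hg1, hg2, hg3, hg4⟩ := ih s' hss hfib
      refine ⟨fun z => if z = x then y else if z = y then x else g' z, ?_, ?_, ?_, ?_⟩
      · intro z hz
        dsimp only
        split_ifs with h1 h2
        · exact hys
        · exact hx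
        · exact hsub (hg1 z ((hmem' z).2 ⟨hz, h1, h2⟩))
      · intro z hz
        by_cases h1 : z = x
        · subst h1; simp [hyx]
        · by_cases h2 : z = y
          · subst h2; simp [hyx]
          · have hz' : z ∈ s' := (hmem' z).2 ⟨hz, h1, h2⟩
            have hgz : g' z ∈ s' := hg1 z hz'
            have hgx : g' z ≠ x := fun hc => hxs' (hc ▸ hgz)
            have hgy : g' z ≠ y := fun hc => hys' (hc ▸ hgz)
            simp only [if_neg h1, if_neg h2, if_neg hgx, if_neg hgy]
            exact hg2 z hz'
      · intro z hz
        dsimp only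
        split_ifs with h1 h2
        · exact fun hc => hyx (hc.trans h1)
        · exact fun hc => hyx (h2.symm.trans hc.symm)
        · exact hg3 z ((hmem' z).2 ⟨hz, h1, h2⟩)
      · intro z hz
        dsimp only
        split_ifs with h1 h2
        · rw [h1, hfy]
        · rw [h2, hfy]
        · exact hg4 z ((hmem' z).2 ⟨hz, h1, h2⟩)

/-- Reconstruction map: decodes an (ordered half-injection, values) pair into a sequence. -/
noncomputable def recon (m N k : ℕ) (hN : 0 < N)
    (p : (Fin k → Fin m) × (Fin k → Fin N)) : Fin m → Fin N := fun x =>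
  if h : ∃ j : Fin k, p.1 j = x then p.2 h.choose
  else if h2 : ((Finset.univ.filter (fun y : Fin m => ¬ ∃ j : Fin k, p.1 j = y)).sort
      (· ≤ ·)).idxOf x < k then p.2 ⟨_, h2⟩
  else ⟨0, hN⟩

/-- Counting sequences with all-even multiplicities: the number of sequences in
`[N]^m` (m even) in which every value appears an even number of times is at most
`(m!/(m/2)!) · N^(m/2)`. -/
theorem stmt_10 (N m : ℕ) (hN : 1 ≤ N) (hm : Even m) :
    ((Finset.univ.filter (fun f : Fin m → Fin N =>
        ∀ j : Fin N, Even ((Finset.univ.filter (fun l : Fin m => f l = j)).card))).card : ℝ)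
      ≤ (Nat.factorial m : ℝ) / (Nat.factorial (m / 2)) * (N : ℝ) ^ (m / 2) := by
  obtain ⟨k, hk⟩ := hm
  have hk2 : m / 2 = k := by omega
  have hNpos : 0 < N := hN
  set S : Finset (Fin k → Fin m) := Finset.univ.filter (fun ι => Function.Injective ι) with hS
  have hsurj : Set.SurjOn (recon m N k hNpos)
      ↑(S ×ˢ (Finset.univ : Finset (Fin k → Fin N)))
      ↑(Finset.univ.filter (fun f : Fin m → Fin N =>
        ∀ j : Fin N, Even ((Finset.univ.filter (fun l : Fin m => f l = j)).card))) := by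
    intro f hf
    have hf' : ∀ j : Fin N, Even ((Finset.univ.filter (fun l : Fin m => f l = j)).card) :=
      (Finset.mem_filter.1 (Finset.mem_coe.1 hf)).2
    obtain ⟨g, hg1, hg2, hg3, hg4⟩ := exists_pairing Finset.univ f (fun b => hf' b)
    have hg2' : ∀ x, g (g x) = x := fun x => hg2 x (Finset.mem_univ x)
    have hg3' : ∀ x, g x ≠ x := fun x => hg3 x (Finset.mem_univ x)
    have hg4' : ∀ x, f (g x) = f x := fun x => hg4 x (Finset.mem_univ x)
    have ginj : Function.Injective g := fun a b hab => by
      have := congrArg g hab; rwa [hg2', hg2'] at this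
    set A : Finset (Fin m) := Finset.univ.filter (fun x => x < g x) with hA
    set B : Finset (Fin m) := Finset.univ.filter (fun x => g x < x) with hB
    have hcardAB : A.card = B.card := by
      apply Finset.card_bij (fun x _ => g x)
      · intro a ha
        simp only [hA, hB, Finset.mem_filter, Finset.mem_univ, true_and] at ha ⊢
        rw [hg2']; exact ha
      · intro a _ b _ hab
        exact ginj hab
      · intro b hb
        refine ⟨g b, ?_, hg2' b⟩
        simp only [hA, hB, Finset.mem_filter, Finset.mem_univ, true_and] at hb ⊢
        rw [hg2']; exact hb
    have hBneg : Finset.univ.filter (fun x : Fin m => ¬ x < g x) = B := by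
      ext z
      simp only [hB, Finset.mem_filter, Finset.mem_univ, true_and, not_lt]
      exact ⟨fun hz => lt_of_le_of_ne hz (hg3' z), fun hz => hz.le⟩
    have hsum := Finset.card_filter_add_card_filter_not
      (s := (Finset.univ : Finset (Fin m))) (p := fun x => x < g x)
    rw [hBneg, ← hA] at hsum
    have hAcard : A.card = k := by
      rw [Finset.card_univ, Fintype.card_fin] at hsum
      omega
    set L := A.sort (· ≤ ·) with hLdef
    have hLlen : L.length = k := by rw [hLdef, Finset.length_sort, hAcard]
    have hjlt : ∀ j : Fin k, j.1 < L.length := fun j => by rw [hLlen]; exact j.2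
    have hLnd : L.Nodup := Finset.sort_nodup _ _
    set e : Fin k → Fin m := fun j => L.get ⟨j.1, hjlt j⟩ with he
    set ι : Fin k → Fin m := fun j => g (e j) with hι
    set v : Fin k → Fin N := fun j => f (e j) with hv
    have he_mem : ∀ j, e j ∈ A := fun j => (Finset.mem_sort _).1 (L.get_mem _)
    have he_inj : Function.Injective e := by
      intro a b hab
      have hab' : L.get ⟨a.1, hjlt a⟩ = L.get ⟨b.1, hjlt b⟩ := hab
      have h2 := congrArg Fin.val ((hLnd.get_inj_iff).1 hab')
      exact Fin.ext h2
    have hι_inj : Function.Injective ι := by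
      intro a b hab
      exact he_inj (ginj hab)
    have hrange : ∀ y : Fin m, (∃ j : Fin k, ι j = y) ↔ g y < y := by
      intro y
      constructor
      · rintro ⟨j, rfl⟩
        have hmem := he_mem j
        rw [hA, Finset.mem_filter] at hmem
        show g (ι j) < ι j
        have h2 : g (ι j) = e j := hg2' (e j)
        rw [h2]
        exact hmem.2
      · intro hy
        have hgyA : g y ∈ A := by
          rw [hA, Finset.mem_filter]
          exact ⟨Finset.mem_univ _, by rw [hg2']; exact hy⟩
        have hgyL : g y ∈ L := (Finset.mem_sort _).2 hgyA
        obtain ⟨n, hn⟩ := List.mem_iff_get.1 hgyL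
        refine ⟨⟨n.1, by rw [← hLlen]; exact n.2⟩, ?_⟩
        show g (L.get n) = y
        rw [hn, hg2']
    have hC : Finset.univ.filter (fun y : Fin m => ¬ ∃ j : Fin k, ι j = y) = A := by
      ext y
      simp only [Finset.mem_filter, Finset.mem_univ, true_and]
      rw [hrange y, hA, Finset.mem_filter]
      simp only [Finset.mem_univ, true_and, not_lt]
      exact ⟨fun hz => lt_of_le_of_ne hz (hg3' y).symm, fun hz => hz.le⟩
    refine ⟨(ι, v), ?_, ?_⟩
    · refine Finset.mem_coe.2 (Finset.mem_product.2 ⟨?_, Finset.mem_univ _⟩)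
      exact Finset.mem_filter.2 ⟨Finset.mem_univ _, hι_inj⟩
    · funext x
      rw [recon]
      by_cases h : ∃ j : Fin k, ι j = x
      · rw [dif_pos h]
        have spec : ι h.choose = x := h.choose_spec
        conv_rhs => rw [← spec]
        exact (hg4' (e h.choose)).symm
      · rw [dif_neg h]
        have hxA : x ∈ A := by
          rcases (hg3' x).lt_or_gt with hlt | hlt
          · exact absurd ((hrange x).2 hlt) h
          · rw [hA, Finset.mem_filter]; exact ⟨Finset.mem_univ _, hlt⟩
        have hxL : x ∈ L := (Finset.mem_sort _).2 hxA
        have hCsort : (Finset.univ.filter (fun y : Fin m => ¬ ∃ j : Fin k, ι j = y)).sort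
            (· ≤ ·) = L := by rw [hC, hLdef]
        have hidx : ((Finset.univ.filter (fun y : Fin m => ¬ ∃ j : Fin k, ι j = y)).sort
            (· ≤ ·)).idxOf x = L.idxOf x := by rw [hCsort]
        have hlt : ((Finset.univ.filter (fun y : Fin m => ¬ ∃ j : Fin k, ι j = y)).sort
            (· ≤ ·)).idxOf x < k := by
          rw [hidx, ← hLlen]
          exact List.idxOf_lt_length_iff.2 hxL
        rw [dif_pos hlt]
        have hget : ∀ (i : ℕ) (hi : i < L.length), i = L.idxOf x → L.get ⟨i, hi⟩ = x := by
          intro i hi hi2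
          subst hi2
          exact List.idxOf_get hi
        exact congrArg f (hget _ _ hidx)
  have hcard := Finset.card_le_card_of_surjOn _ hsurj
  have hprod : (S ×ˢ (Finset.univ : Finset (Fin k → Fin N))).card
      = m.descFactorial k * N ^ k := by
    rw [Finset.card_product, Finset.card_univ]
    congr 1
    · have h1 : S.card = Fintype.card {ι : Fin k → Fin m // Function.Injective ι} := by
        rw [Fintype.card_subtype]
      rw [h1, Fintype.card_congr (Equiv.subtypeInjectiveEquivEmbedding (Fin k) (Fin m)),
        Fintype.card_embedding_eq, Fintype.card_fin, Fintype.card_fin]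
    · rw [Fintype.card_fun, Fintype.card_fin, Fintype.card_fin]
  have hdesc : (m.descFactorial k : ℝ) = (m.factorial : ℝ) / (k.factorial : ℝ) := by
    have h : (m - k).factorial * m.descFactorial k = m.factorial :=
      Nat.factorial_mul_descFactorial (by rw [hk]; exact Nat.le_add_right k k)
    rw [show m - k = k from by rw [hk]; exact Nat.add_sub_cancel k k] at h
    have hkf : (k.factorial : ℝ) ≠ 0 := by positivity
    field_simp
    rw [mul_comm]
    exact_mod_cast h
  rw [hk2, ← hdesc]
  have : ((Finset.univ.filter (fun f : Fin m → Fin N =>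
      ∀ j : Fin N, Even ((Finset.univ.filter (fun l : Fin m => f l = j)).card))).card : ℝ)
      ≤ ((m.descFactorial k * N ^ k : ℕ) : ℝ) := by
    exact_mod_cast hcard.trans_eq hprod
  calc _ ≤ ((m.descFactorial k * N ^ k : ℕ) : ℝ) := this
    _ = (m.descFactorial k : ℝ) * (N : ℝ) ^ k := by push_cast; ring
end

section
/- Admissible matrix count: the number of matrices (r_{ab}) ∈ (N^{-1}ℤ_{≥0})^{κ×κ} with all row and column sums equal to 1/κ and satisfying (l-1)/N ≤ ‖r - κ^{-2}𝟙𝟙^T‖_F² < l/N is at most C (lN)^{(κ-1)²/2} for a constant C depending only on κ; in particular, such a matrix is uniquely determined by its leading principal (κ-1)×(κ-1) submatrix. -/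
set_option maxHeartbeats 1000000

lemma stmt19_uniq {κ : ℕ} (hκ : 2 ≤ κ) (r r' : Matrix (Fin κ) (Fin κ) ℝ)
    (hr : ∀ a, ∑ b, r a b = 1 / κ) (hc : ∀ b, ∑ a, r a b = 1 / κ)
    (hr' : ∀ a, ∑ b, r' a b = 1 / κ) (hc' : ∀ b, ∑ a, r' a b = 1 / κ)
    (hblock : ∀ a b : Fin κ, a.val < κ - 1 → b.val < κ - 1 → r a b = r' a b) :
    r = r' := by
  have hlast : ∀ x : Fin κ, ¬ x.val < κ - 1 → x = ⟨κ - 1, by omega⟩ := by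
    intro x hx
    have h2 := x.isLt
    exact Fin.ext (by simp only [Fin.val_mk]; omega)
  have h1 : ∀ a b : Fin κ, a.val < κ - 1 → r a b = r' a b := by
    intro a b ha
    by_cases hb : b.val < κ - 1
    · exact hblock a b ha hb
    · have hb' := hlast b hb
      have e : ∀ M : Matrix (Fin κ) (Fin κ) ℝ, (∀ a, ∑ b, M a b = 1 / κ) →
          M a b = 1 / κ - ∑ b' ∈ Finset.univ.erase b, M a b' := by
        intro M hM
        have := Finset.sum_erase_add Finset.univ (fun b' => M a b') (Finset.mem_univ b)
        rw [hM a] at this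
        linarith
      rw [e r hr, e r' hr']
      congr 1
      apply Finset.sum_congr rfl
      intro b' hb'mem
      have hne : b' ≠ b := (Finset.mem_erase.mp hb'mem).1
      have : b'.val < κ - 1 := by
        by_contra h
        exact hne ((hlast b' h).trans hb'.symm)
      exact hblock a b' ha this
  ext a b
  by_cases ha : a.val < κ - 1
  · exact h1 a b ha
  · have e : ∀ M : Matrix (Fin κ) (Fin κ) ℝ, (∀ b, ∑ a, M a b = 1 / κ) →
        M a b = 1 / κ - ∑ a' ∈ Finset.univ.erase a, M a' b := by
      intro M hM
      have := Finset.sum_erase_add Finset.univ (fun a' => M a' b) (Finset.mem_univ a)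
      rw [hM b] at this
      linarith
    rw [e r hc, e r' hc']
    congr 1
    apply Finset.sum_congr rfl
    intro a' ha'mem
    have hne : a' ≠ a := (Finset.mem_erase.mp ha'mem).1
    have : a'.val < κ - 1 := by
      by_contra h
      exact hne ((hlast a' h).trans (hlast a ha).symm)
    exact h1 a' b this

/-- Admissible matrix count: matrices with entries in `N⁻¹ℤ_{≥0}`, all row and
column sums `1/κ`, and `(l-1)/N ≤ ‖r - κ⁻²𝟙𝟙ᵀ‖_F² < l/N` number at most
`C (lN)^{(κ-1)²/2}` with `C` depending only on `κ`; moreover any admissible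
matrix is uniquely determined by its leading principal `(κ-1)×(κ-1)` submatrix. -/
theorem stmt_19 (κ : ℕ) (hκ : 2 ≤ κ) :
    ∃ C : ℝ, 0 < C ∧
      ∀ N l : ℕ, κ ∣ N → 1 ≤ l → l ≤ N →
        (((Set.ncard {r : Matrix (Fin κ) (Fin κ) ℝ |
            (∀ a b, ∃ z : ℕ, r a b = (z : ℝ) / N) ∧
            (∀ a, ∑ b, r a b = 1 / κ) ∧
            (∀ b, ∑ a, r a b = 1 / κ) ∧
            ((l : ℝ) - 1) / N ≤ ∑ a, ∑ b, (r a b - ((κ : ℝ) ^ 2)⁻¹) ^ 2 ∧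
            (∑ a, ∑ b, (r a b - ((κ : ℝ) ^ 2)⁻¹) ^ 2) < (l : ℝ) / N} : ℕ) : ℝ)
          ≤ C * ((l * N : ℕ) : ℝ) ^ ((((κ - 1 : ℕ) ^ 2 : ℕ) : ℝ) / 2)) ∧
        ∀ r r' : Matrix (Fin κ) (Fin κ) ℝ,
          ((∀ a b, ∃ z : ℕ, r a b = (z : ℝ) / N) ∧
            (∀ a, ∑ b, r a b = 1 / κ) ∧ (∀ b, ∑ a, r a b = 1 / κ)) →
          ((∀ a b, ∃ z : ℕ, r' a b = (z : ℝ) / N) ∧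
            (∀ a, ∑ b, r' a b = 1 / κ) ∧ (∀ b, ∑ a, r' a b = 1 / κ)) →
          (∀ a b : Fin (κ - 1),
            r (Fin.castLE (by omega) a) (Fin.castLE (by omega) b)
              = r' (Fin.castLE (by omega) a) (Fin.castLE (by omega) b)) →
          r = r' := by
  refine ⟨(3 : ℝ) ^ ((κ - 1) ^ 2), by positivity, ?_⟩
  intro N l hdvd hl hlN
  have hN : 0 < N := lt_of_lt_of_le hl hlN
  have hNR : (0 : ℝ) < N := by exact_mod_cast hN
  set x : ℝ := ((l * N : ℕ) : ℝ) with hxdef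
  have hx1 : (1 : ℝ) ≤ x := by
    have h : 1 ≤ l * N := Nat.one_le_iff_ne_zero.mpr (by positivity)
    rw [hxdef]
    exact_mod_cast h
  have hx0 : (0 : ℝ) ≤ x := by linarith
  have hs1 : (1 : ℝ) ≤ Real.sqrt x := by
    rw [show (1:ℝ) = Real.sqrt 1 by simp]
    exact Real.sqrt_le_sqrt hx1
  have hs0 : (0 : ℝ) ≤ Real.sqrt x := Real.sqrt_nonneg _
  set c : ℝ := ((κ : ℝ) ^ 2)⁻¹ with hcdef
  set t : ℝ := (N : ℝ) * c - Real.sqrt x with htdef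
  set m' : ℕ := ⌈t⌉₊ with hm'def
  set M' : ℕ := ⌊2 * Real.sqrt x⌋₊ with hM'def
  set S : Set (Matrix (Fin κ) (Fin κ) ℝ) := {r : Matrix (Fin κ) (Fin κ) ℝ |
            (∀ a b, ∃ z : ℕ, r a b = (z : ℝ) / N) ∧
            (∀ a, ∑ b, r a b = 1 / κ) ∧
            (∀ b, ∑ a, r a b = 1 / κ) ∧
            ((l : ℝ) - 1) / N ≤ ∑ a, ∑ b, (r a b - ((κ : ℝ) ^ 2)⁻¹) ^ 2 ∧
            (∑ a, ∑ b, (r a b - ((κ : ℝ) ^ 2)⁻¹) ^ 2) < (l : ℝ) / N} with hSdef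
  have hNsqrt : (N : ℝ) * Real.sqrt ((l : ℝ) / N) = Real.sqrt x := by
    rw [show x = (l : ℝ) / N * (N : ℝ) ^ 2 by
      rw [hxdef]; push_cast; field_simp]
    rw [Real.sqrt_mul (by positivity), Real.sqrt_sq hNR.le]
    ring
  have key : ∀ r ∈ S, ∀ a b : Fin κ,
      r a b * N = (⌊r a b * N⌋₊ : ℝ) ∧ m' ≤ ⌊r a b * N⌋₊ ∧ ⌊r a b * N⌋₊ - m' ≤ M' := by
    intro r hrS a b
    obtain ⟨hz, hrow, hcol, hlb, hub⟩ := hrS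
    obtain ⟨z, hzeq⟩ := hz a b
    have h1 : r a b * N = (z : ℝ) := by rw [hzeq]; field_simp
    have hfl : ⌊r a b * N⌋₊ = z := by
      rw [h1]; exact Nat.floor_natCast z
    have hterm : (r a b - c) ^ 2 ≤ ∑ a', ∑ b', (r a' b' - c) ^ 2 := by
      calc (r a b - c) ^ 2 ≤ ∑ b', (r a b' - c) ^ 2 :=
            Finset.single_le_sum (f := fun b' => (r a b' - c) ^ 2)
              (fun i _ => sq_nonneg _) (Finset.mem_univ b)
        _ ≤ ∑ a', ∑ b', (r a' b' - c) ^ 2 :=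
            Finset.single_le_sum (f := fun a' => ∑ b', (r a' b' - c) ^ 2)
              (fun i _ => Finset.sum_nonneg fun _ _ => sq_nonneg _) (Finset.mem_univ a)
    have h2 : (r a b - c) ^ 2 < (l : ℝ) / N := lt_of_le_of_lt hterm hub
    have habs : |r a b - c| < Real.sqrt ((l : ℝ) / N) := by
      have hsq : (Real.sqrt ((l : ℝ) / N)) ^ 2 = (l : ℝ) / N :=
        Real.sq_sqrt (by positivity)
      apply abs_lt_of_sq_lt_sq _ (Real.sqrt_nonneg _)
      rw [hsq]
      exact h2
    obtain ⟨hlo, hhi⟩ := abs_lt.mp habs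
    have hzlo : t < (z : ℝ) := by
      rw [htdef, ← h1, ← hNsqrt]
      nlinarith [hNR]
    have hzhi : (z : ℝ) < t + 2 * Real.sqrt x := by
      rw [htdef, ← h1, ← hNsqrt]
      nlinarith [hNR]
    have hm'z : m' ≤ z := Nat.ceil_le.mpr hzlo.le
    refine ⟨by rw [hfl]; exact h1, by rw [hfl]; exact hm'z, ?_⟩
    rw [hfl]
    apply Nat.le_floor
    rw [Nat.cast_sub hm'z]
    have := Nat.le_ceil t
    rw [← hm'def] at this
    linarith
  set d := (κ - 1) * (κ - 1) with hddef
  set F : Finset ((Fin (κ - 1)) → (Fin (κ - 1)) → ℕ) :=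
    Fintype.piFinset (fun _ => Fintype.piFinset fun _ => Finset.range (M' + 1)) with hFdef
  have hcle : κ - 1 ≤ κ := by omega
  have hcount : S.ncard ≤ F.card := by
    rw [← Set.ncard_coe_finset]
    refine Set.ncard_le_ncard_of_injOn
      (fun r => fun a b => ⌊r (Fin.castLE hcle a) (Fin.castLE hcle b) * (N : ℝ)⌋₊ - m')
      ?_ ?_ F.finite_toSet
    · intro r hrS
      simp only [Finset.mem_coe, hFdef, Fintype.mem_piFinset, Finset.mem_range]
      intro a b
      have := (key r hrS (Fin.castLE hcle a) (Fin.castLE hcle b)).2.2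
      omega
    · intro r hrS r' hr'S heq
      have hrS' := hrS
      have hr'S' := hr'S
      obtain ⟨_, hrow, hcol, _, _⟩ := hrS
      obtain ⟨_, hrow', hcol', _, _⟩ := hr'S
      simp only at heq
      apply stmt19_uniq hκ r r' hrow hcol hrow' hcol'
      intro a b ha hb
      have ha' : a = Fin.castLE hcle ⟨a.val, by omega⟩ := Fin.ext rfl
      have hb' : b = Fin.castLE hcle ⟨b.val, by omega⟩ := Fin.ext rfl
      set A : Fin κ := Fin.castLE hcle ⟨a.val, by omega⟩ with hA
      set B : Fin κ := Fin.castLE hcle ⟨b.val, by omega⟩ with hB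
      have h1 : ⌊r A B * (N : ℝ)⌋₊ - m' = ⌊r' A B * (N : ℝ)⌋₊ - m' :=
        congrFun (congrFun heq ⟨a.val, by omega⟩) ⟨b.val, by omega⟩
      have k1 := key r hrS' A B
      have k2 := key r' hr'S' A B
      have hfe : ⌊r A B * (N : ℝ)⌋₊ = ⌊r' A B * (N : ℝ)⌋₊ := by omega
      have h3 : r A B * (N : ℝ) = r' A B * (N : ℝ) := by
        rw [k1.1, k2.1, hfe]
      have h4 : r A B = r' A B := mul_right_cancel₀ (ne_of_gt hNR) h3
      rw [ha', hb']
      exact h4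
  have hFcard : F.card = (M' + 1) ^ d := by
    rw [hFdef, Fintype.card_piFinset]
    simp [Finset.card_range, Finset.prod_const, Finset.card_univ, hddef, pow_mul]
  refine ⟨?_, ?_⟩
  · have hM'le : (M' : ℝ) ≤ 2 * Real.sqrt x := Nat.floor_le (by positivity)
    have hstep : ((M' + 1 : ℕ) : ℝ) ≤ 3 * Real.sqrt x := by
      push_cast; linarith
    have hpow : ((M' + 1 : ℕ) : ℝ) ^ d ≤ (3 * Real.sqrt x) ^ d :=
      pow_le_pow_left₀ (by positivity) hstep d
    have hsqd : (Real.sqrt x) ^ d = x ^ ((((κ - 1 : ℕ) ^ 2 : ℕ) : ℝ) / 2) := by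
      rw [Real.sqrt_eq_rpow, ← Real.rpow_natCast (x ^ ((1:ℝ)/2)) d, ← Real.rpow_mul hx0]
      congr 1
      rw [hddef]
      push_cast [pow_two]
      ring
    calc (S.ncard : ℝ) ≤ (((M' + 1) ^ d : ℕ) : ℝ) := by
          exact_mod_cast hcount.trans_eq hFcard
      _ = ((M' + 1 : ℕ) : ℝ) ^ d := by push_cast; ring
      _ ≤ (3 * Real.sqrt x) ^ d := hpow
      _ = (3 : ℝ) ^ d * (Real.sqrt x) ^ d := mul_pow _ _ _
      _ = (3 : ℝ) ^ ((κ - 1) ^ 2) * x ^ ((((κ - 1 : ℕ) ^ 2 : ℕ) : ℝ) / 2) := by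
          rw [hsqd, hddef, pow_two]
  · intro r r' hr hr' hbl
    apply stmt19_uniq hκ r r' hr.2.1 hr.2.2 hr'.2.1 hr'.2.2
    intro a b ha hb
    have := hbl ⟨a.val, ha⟩ ⟨b.val, hb⟩
    have ha' : Fin.castLE (by omega : κ - 1 ≤ κ) (⟨a.val, ha⟩ : Fin (κ - 1)) = a := Fin.ext rfl
    have hb' : Fin.castLE (by omega : κ - 1 ≤ κ) (⟨b.val, hb⟩ : Fin (κ - 1)) = b := Fin.ext rfl
    rwa [ha', hb'] at this
end
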